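/- arXiv:2112.10141 — 3 statements merged into one kernel-verified Lean document; each statement's English description precedes it below -/
import Mathlib

section
/- Let (h_n)_{n∈ℕ} be an infinite decreasing chain h_{n+1} ⊂ h_n of pairwise strongly separated half-spaces in a finite-dimensional CAT(0) cubical complex X. Then the sequence of hyperplanes (ĥ_n) is a Gromov sequence in the contact graph CX, i.e. (ĥ_n | ĥ_m)_{ĥ₀} → ∞ as n, m → ∞; in particular CX is unbounded and its Gromov boundary is nonempty. -/
/-!
A combinatorial model of a finite-dimensional CAT(0) cubical complex:
the vertex set `V` together with its collection of half-spaces `HS ⊆ Set V`,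
axiomatized as a pocset of subsets of `V` whose dual (Sageev) complex has
vertex set exactly `V`.
-/

open Set

variable {V : Type*}

/-- Two half-spaces are transverse if all four corner intersections are nonempty. -/
def Transverse (h k : Set V) : Prop :=
  (h ∩ k).Nonempty ∧ (hᶜ ∩ k).Nonempty ∧ (h ∩ kᶜ).Nonempty ∧ (hᶜ ∩ kᶜ).Nonempty

lemma Transverse.symm {h k : Set V} (t : Transverse h k) : Transverse k h := by
  obtain ⟨a, b, c, d⟩ := t
  refine ⟨?_, ?_, ?_, ?_⟩ <;> rw [Set.inter_comm] <;> assumption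

/-- `h` and `k` bound the same hyperplane (they are equal or complementary). -/
def SameHyp (h k : Set V) : Prop := k = h ∨ k = hᶜ

lemma SameHyp.symm {h k : Set V} (s : SameHyp h k) : SameHyp k h := by
  rcases s with rfl | rfl
  · exact Or.inl rfl
  · exact Or.inr (compl_compl h).symm

/-- A model of a finite-dimensional CAT(0) cubical complex with vertex set `V`. -/
structure CubicalCpx (V : Type*) where
  /-- the collection of half-spaces -/
  HS : Set (Set V)
  compl_mem : ∀ h ∈ HS, hᶜ ∈ HS
  proper : ∀ h ∈ HS, h.Nonempty ∧ hᶜ.Nonempty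
  /-- finitely many hyperplanes separate two vertices -/
  finite_sep : ∀ x y : V, {h ∈ HS | x ∈ h ∧ y ∉ h}.Finite
  /-- distinct vertices are separated by a hyperplane -/
  sep : ∀ x y : V, x ≠ y → ∃ h ∈ HS, x ∈ h ∧ y ∉ h
  /-- finite dimensionality: a bound on families of pairwise transverse hyperplanes -/
  dim : ℕ
  finite_dim : ∀ T : Finset (Set V), ↑T ⊆ HS →
    (∀ h ∈ T, ∀ k ∈ T, h ≠ k → Transverse h k) → T.card ≤ dim
  /-- every consistent total orientation satisfying the descending chain condition
  is the ultrafilter of half-spaces of an actual vertex (Sageev--Roller duality) -/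
  realized : ∀ ω : Set (Set V), ω ⊆ HS →
    (∀ h ∈ HS, h ∈ ω ↔ hᶜ ∉ ω) →
    (∀ h ∈ ω, ∀ k ∈ ω, (h ∩ k).Nonempty) →
    (∀ f : ℕ → Set V, (∀ n, f n ∈ ω) → (∀ n, f (n + 1) ⊆ f n) → ∃ n, f (n + 1) = f n) →
    ∃ x : V, ω = {h ∈ HS | x ∈ h}

namespace CubicalCpx

variable (C : CubicalCpx V)

/-- `h ⊊ k` tightly nested: no half-space of the complex lies properly between them. -/
def TightlyNested (h k : Set V) : Prop :=
  h ⊂ k ∧ ∀ l ∈ C.HS, h ⊆ l → l ⊆ k → l = h ∨ l = k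

/-- tightly nested up to a choice of orientations of the two hyperplanes -/
def TightContact (h k : Set V) : Prop :=
  ∃ h' k', SameHyp h h' ∧ SameHyp k k' ∧ C.TightlyNested h' k'

/-- Two half-spaces (hyperplanes) are strongly separated if they are parallel
(not transverse) and no hyperplane of the complex is transverse to both. -/
def StronglySeparated (h k : Set V) : Prop :=
  ¬ Transverse h k ∧ ∀ l ∈ C.HS, ¬ (Transverse l h ∧ Transverse l k)

/-- The contact graph: vertices are the hyperplanes of `X` (here represented by
their half-spaces, with both orientations of a hyperplane at graph distance `0`
from each other being excluded by `¬ SameHyp`), and two distinct hyperplanes are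
adjacent iff they are transverse or tightly nested. -/
def contactGraph : SimpleGraph C.HS where
  Adj h k := ¬ SameHyp (h : Set V) k ∧
    (Transverse (h : Set V) k ∨ C.TightContact h k ∨ C.TightContact k h)
  symm := ⟨by
    rintro a b ⟨ns, r⟩
    refine ⟨fun s => ns s.symm, ?_⟩
    rcases r with t | tc | tc
    · exact Or.inl t.symm
    · exact Or.inr (Or.inr tc)
    · exact Or.inr (Or.inl tc)⟩
  loopless := ⟨fun a ha => ha.1 (Or.inl rfl)⟩

/-- the combinatorial metric: the number of hyperplanes separating two vertices -/
noncomputable def dist (x y : V) : ℕ := {h ∈ C.HS | x ∈ h ∧ y ∉ h}.ncard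

end CubicalCpx

/-! ### Auxiliary development for Statement 5 -/

section Aux5

variable {V : Type*}

/-- side predicate: the hyperplane of `x` lies (weakly) inside the half-space `h` -/
abbrev SP5 (h x : Set V) : Prop := x ⊆ h ∨ xᶜ ⊆ h

/-- `x` crosses the hyperplane of `h`: same hyperplane or transverse. -/
def Cr5 (h x : Set V) : Prop := SameHyp h x ∨ Transverse x h

lemma sameHyp_trans5 {a b c : Set V} (h1 : SameHyp a b) (h2 : SameHyp b c) :
    SameHyp a c := by
  rcases h1 with rfl | rfl
  · exact h2
  · rcases h2 with rfl | h2
    · exact Or.inr rfl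
    · exact Or.inl (by rw [h2, compl_compl])

lemma sameHyp_compl_left5 {h x : Set V} : SameHyp hᶜ x ↔ SameHyp h x := by
  constructor <;> rintro (rfl | h2)
  · exact Or.inr rfl
  · exact Or.inl (by rw [h2, compl_compl])
  · exact Or.inr (compl_compl _).symm
  · exact Or.inl h2

lemma transverse_compl_left5 {x h : Set V} : Transverse xᶜ h ↔ Transverse x h := by
  unfold Transverse
  rw [compl_compl]
  tauto

lemma transverse_compl_right5 {x h : Set V} : Transverse x hᶜ ↔ Transverse x h := by
  unfold Transverse
  rw [compl_compl]
  tauto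

lemma transverse_sameHyp5 {x y y' : Set V} (s : SameHyp y y') (t : Transverse x y) :
    Transverse x y' := by
  rcases s with rfl | rfl
  · exact t
  · exact transverse_compl_right5.mpr t

lemma transverse_not_sameHyp5 {x h : Set V} (t : Transverse x h) : ¬ SameHyp h x := by
  rintro (rfl | rfl)
  · obtain ⟨y, hy1, hy2⟩ := t.2.1
    exact hy1 hy2
  · obtain ⟨y, hy1, hy2⟩ := t.1
    exact hy1 hy2

lemma sp_of_sameHyp5 {h x a : Set V} (s : SameHyp x a) (sp : SP5 h x) : SP5 h a := by
  rcases s with rfl | rfl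
  · exact sp
  · rcases sp with h1 | h1
    · exact Or.inr (by rwa [compl_compl])
    · exact Or.inl h1

lemma sp_or_sp5 {h x : Set V} (ht : ¬ Transverse x h) : SP5 h x ∨ SP5 hᶜ x := by
  by_cases h1 : (x ∩ h).Nonempty
  · by_cases h2 : (xᶜ ∩ h).Nonempty
    · by_cases h3 : (x ∩ hᶜ).Nonempty
      · by_cases h4 : (xᶜ ∩ hᶜ).Nonempty
        · exact absurd ⟨h1, h2, h3, h4⟩ ht
        · refine Or.inl (Or.inr fun y hy => ?_)
          by_contra hyh
          exact h4 ⟨y, hy, hyh⟩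
      · refine Or.inl (Or.inl fun y hy => ?_)
        by_contra hyh
        exact h3 ⟨y, hy, hyh⟩
    · refine Or.inr (Or.inr fun y hy => ?_)
      intro hyh
      exact h2 ⟨y, hy, hyh⟩
  · refine Or.inr (Or.inl fun y hy => ?_)
    intro hyh
    exact h1 ⟨y, hy, hyh⟩

lemma sp_not_both5 {h x : Set V} (hx1 : x.Nonempty) (hx2 : xᶜ.Nonempty)
    (hns : ¬ SameHyp h x) (s1 : SP5 h x) (s2 : SP5 hᶜ x) : False := by
  rcases s1 with h1 | h1 <;> rcases s2 with h2 | h2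
  · obtain ⟨y, hy⟩ := hx1
    exact h2 hy (h1 hy)
  · refine hns (Or.inl (subset_antisymm h1 fun y hy => ?_))
    by_contra hyx
    exact h2 hyx hy
  · refine hns (Or.inr (subset_antisymm h2 fun y hy => ?_))
    by_contra hyx
    exact hy (h1 hyx)
  · obtain ⟨y, hy⟩ := hx2
    exact h2 hy (h1 hy)

lemma tight_case5 (C : CubicalCpx V) {h a b : Set V} (hh : h ∈ C.HS)
    (ha : a ∈ C.HS) (hb : b ∈ C.HS) (tn : C.TightlyNested a b)
    (hna : ¬ SameHyp h a) (hnb : ¬ SameHyp h b)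
    (sa : SP5 h a) (sb : SP5 hᶜ b) : False := by
  obtain ⟨hab, htight⟩ := tn
  obtain ⟨hane, -⟩ := C.proper a ha
  obtain ⟨-, hbne⟩ := C.proper b hb
  rcases sa with h1 | h1 <;> rcases sb with h2 | h2
  · obtain ⟨y, hy⟩ := hane
    exact h2 (hab.subset hy) (h1 hy)
  · have hhb : h ⊆ b := fun y hy => by
      by_contra hyb
      exact h2 hyb hy
    rcases htight h hh h1 hhb with e | e
    · exact hna (Or.inl e.symm)
    · exact hnb (Or.inl e.symm)
  · refine hab.ne (subset_antisymm hab.subset fun y hy => ?_)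
    by_contra hya
    exact h2 hy (h1 hya)
  · obtain ⟨y, hy⟩ := hbne
    exact h2 hy (h1 fun hya => hy (hab.subset hya))

variable {C : CubicalCpx V}

lemma no_edge_across5 {h : Set V} (hh : h ∈ C.HS) {v w : C.HS}
    (hadj : C.contactGraph.Adj v w)
    (hcv : ¬ Cr5 h v.1) (hcw : ¬ Cr5 h w.1)
    (sv : SP5 h v.1) (sw : SP5 hᶜ w.1) : False := by
  obtain ⟨hns, hcase⟩ := hadj
  rcases hcase with t | ⟨x, y, s1, s2, tn⟩ | ⟨x, y, s1, s2, tn⟩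
  · rcases sv with h1 | h1 <;> rcases sw with h2 | h2
    · obtain ⟨z, hz1, hz2⟩ := t.1
      exact h2 hz2 (h1 hz1)
    · obtain ⟨z, hz1, hz2⟩ := t.2.2.1
      exact h2 hz2 (h1 hz1)
    · obtain ⟨z, hz1, hz2⟩ := t.2.1
      exact h2 hz2 (h1 hz1)
    · obtain ⟨z, hz1, hz2⟩ := t.2.2.2
      exact h2 hz2 (h1 hz1)
  · -- tight contact, `x` an orientation of `v`, `y` of `w`
    have hx : x ∈ C.HS := by
      rcases s1 with rfl | rfl
      · exact v.2
      · exact C.compl_mem _ v.2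
    have hy : y ∈ C.HS := by
      rcases s2 with rfl | rfl
      · exact w.2
      · exact C.compl_mem _ w.2
    refine tight_case5 C hh hx hy tn ?_ ?_ (sp_of_sameHyp5 s1 sv) (sp_of_sameHyp5 s2 sw)
    · exact fun sh => hcv (Or.inl (sameHyp_trans5 sh s1.symm))
    · exact fun sh => hcw (Or.inl (sameHyp_trans5 sh s2.symm))
  · -- tight contact, `x` an orientation of `w`, `y` of `v`
    have hx : x ∈ C.HS := by
      rcases s1 with rfl | rfl
      · exact w.2
      · exact C.compl_mem _ w.2
    have hy : y ∈ C.HS := by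
      rcases s2 with rfl | rfl
      · exact v.2
      · exact C.compl_mem _ v.2
    refine tight_case5 C (C.compl_mem _ hh) hx hy tn ?_ ?_
      (sp_of_sameHyp5 s1 sw) ?_
    · exact fun sh => hcw (Or.inl (sameHyp_trans5 (sameHyp_compl_left5.mp sh) s1.symm))
    · exact fun sh => hcv (Or.inl (sameHyp_trans5 (sameHyp_compl_left5.mp sh) s2.symm))
    · show SP5 hᶜᶜ y
      rw [compl_compl]
      exact sp_of_sameHyp5 s2 sv

lemma walk_minus5 {h : Set V} (hh : h ∈ C.HS) {a b : C.HS}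
    (W : C.contactGraph.Walk a b)
    (hnc : ∀ u ∈ W.support, ¬ Cr5 h u.1) (sa : SP5 hᶜ a.1) : SP5 hᶜ b.1 := by
  induction W with
  | nil => exact sa
  | @cons a c b hadj W' ih =>
    have hmema : a ∈ (SimpleGraph.Walk.cons hadj W').support := by
      rw [SimpleGraph.Walk.support_cons]; exact List.mem_cons_self
    have hmemc : c ∈ (SimpleGraph.Walk.cons hadj W').support := by
      rw [SimpleGraph.Walk.support_cons]
      exact List.mem_cons_of_mem _ W'.start_mem_support
    have hcc : ¬ Cr5 h c.1 := hnc c hmemc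
    have sc : SP5 hᶜ c.1 := by
      by_cases htv : Transverse c.1 h
      · exact absurd (Or.inr htv) hcc
      · rcases sp_or_sp5 htv with hsc | hsc
        · exact absurd (no_edge_across5 hh hadj.symm hcc (hnc a hmema) hsc sa) id
        · exact hsc
    refine ih (fun u hu => hnc u ?_) sc
    rw [SimpleGraph.Walk.support_cons]
    exact List.mem_cons_of_mem _ hu

lemma exists_cross5 {h : Set V} (hh : h ∈ C.HS) {a b : C.HS}
    (W : C.contactGraph.Walk a b) (sa : SP5 hᶜ a.1) (sb : SP5 h b.1) :
    ∃ u : C.HS, u ∈ W.support ∧ Cr5 h u.1 := by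
  by_contra hcon
  push_neg at hcon
  have sb' := walk_minus5 hh W hcon sa
  have hnb : ¬ Cr5 h b.1 := hcon b W.end_mem_support
  obtain ⟨p1, p2⟩ := C.proper b.1 b.2
  exact sp_not_both5 p1 p2 (fun s => hnb (Or.inl s)) sb sb'

lemma adj_congr5 {u w w' : C.HS} (hsh : SameHyp w.1 w'.1)
    (hadj : C.contactGraph.Adj u w) : C.contactGraph.Adj u w' := by
  obtain ⟨hns, hcase⟩ := hadj
  refine ⟨fun sh => hns (sameHyp_trans5 sh hsh.symm), ?_⟩
  rcases hcase with t | ⟨x, y, s1, s2, tn⟩ | ⟨x, y, s1, s2, tn⟩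
  · exact Or.inl (transverse_sameHyp5 hsh t)
  · exact Or.inr (Or.inl ⟨x, y, s1, sameHyp_trans5 hsh.symm s2, tn⟩)
  · exact Or.inr (Or.inr ⟨x, y, sameHyp_trans5 hsh.symm s1, s2, tn⟩)

lemma adj_of_transverse5 {v : C.HS} {h : Set V} (hh : h ∈ C.HS)
    (t : Transverse v.1 h) : C.contactGraph.Adj ⟨h, hh⟩ v :=
  ⟨transverse_not_sameHyp5 t, Or.inl t.symm⟩

section Chain

variable {hs : ℕ → Set V} (hmem : ∀ i, hs i ∈ C.HS)
  (hchain : ∀ i, hs (i + 1) ⊂ hs i)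
  (hss : ∀ i j, i ≠ j → C.StronglySeparated (hs i) (hs j))

include hchain in
lemma hmono5 {i j : ℕ} (hij : i < j) : hs j ⊂ hs i := by
  induction hij with
  | refl => exact hchain i
  | step h ih => exact (hchain _).trans ih

include hmem hchain in
lemma sameHyp_hs_false5 {i j : ℕ} (hij : i ≠ j) (s : SameHyp (hs i) (hs j)) :
    False := by
  rcases lt_or_gt_of_ne hij with hlt | hlt
  · rcases s with e | e
    · exact (hmono5 hchain hlt).ne e
    · obtain ⟨y, hy⟩ := (C.proper _ (hmem i)).2
      have hyj : y ∈ hs j := by rw [e]; exact hy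
      exact hy ((hmono5 hchain hlt).subset hyj)
  · rcases s with e | e
    · exact (hmono5 hchain hlt).ne e.symm
    · obtain ⟨y, hy⟩ := (C.proper _ (hmem i)).1
      have hyc : y ∈ (hs i)ᶜ := by rw [← e]; exact (hmono5 hchain hlt).subset hy
      exact hyc hy

include hmem hchain in
lemma cr_hs_ne5 {k n : ℕ} (hkn : k ≠ n) : ¬ Cr5 (hs k) (hs n) := by
  rintro (s | t)
  · exact sameHyp_hs_false5 hmem hchain hkn s
  · rcases lt_or_gt_of_ne hkn with hlt | hlt
    · obtain ⟨y, hy1, hy2⟩ := t.2.2.1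
      exact hy2 ((hmono5 hchain hlt).subset hy1)
    · obtain ⟨y, hy1, hy2⟩ := t.2.1
      exact hy1 ((hmono5 hchain hlt).subset hy2)

include hmem hchain hss in
lemma cr_unique5 {i j : ℕ} (hij : i ≠ j) {x : Set V} (hx : x ∈ C.HS)
    (c1 : Cr5 (hs i) x) (c2 : Cr5 (hs j) x) : False := by
  rcases c1 with s1 | t1 <;> rcases c2 with s2 | t2
  · exact sameHyp_hs_false5 hmem hchain hij (sameHyp_trans5 s1 s2.symm)
  · exact (hss i j hij).1 (transverse_sameHyp5 s1.symm t2.symm).symm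
  · exact (hss j i (Ne.symm hij)).1 (transverse_sameHyp5 s2.symm t1.symm).symm
  · exact (hss i j hij).2 x hx ⟨t1.symm.symm, t2.symm.symm⟩

include hmem hchain hss in
lemma cr_sp5 {j k : ℕ} (hjk : j < k) {x : Set V} (hx : x ∈ C.HS)
    (c : Cr5 (hs k) x) : SP5 (hs j) x := by
  rcases c with s | t
  · rcases s with rfl | rfl
    · exact Or.inl (hmono5 hchain hjk).subset
    · exact Or.inr (by rw [compl_compl]; exact (hmono5 hchain hjk).subset)
  · by_cases htj : Transverse x (hs j)
    · exact absurd (cr_unique5 hmem hchain hss hjk.ne hx (Or.inr htj) (Or.inr t)) id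
    · rcases sp_or_sp5 htj with hsp | hsp
      · exact hsp
      · exfalso
        rcases hsp with h1 | h1
        · obtain ⟨y, hy1, hy2⟩ := t.1
          exact h1 hy1 ((hmono5 hchain hjk).subset hy2)
        · obtain ⟨y, hy1, hy2⟩ := t.2.1
          exact h1 hy1 ((hmono5 hchain hjk).subset hy2)

include hmem hchain hss in
lemma lemA5 {k : ℕ} (hk : 1 ≤ k) {v : C.HS} (hv : Cr5 (hs k) v.1)
    (W : C.contactGraph.Walk ⟨hs 0, hmem 0⟩ v) : k ≤ W.length := by
  classical
  set S : Finset ℕ := Finset.Ico 1 k with hS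
  have hex : ∀ j ∈ S, ∃ u : C.HS, u ∈ W.support ∧ Cr5 (hs j) u.1 := by
    intro j hj
    rw [hS, Finset.mem_Ico] at hj
    refine exists_cross5 (hmem j) W ?_ ?_
    · exact Or.inr (compl_subset_compl.mpr (hmono5 hchain (by omega : (0:ℕ) < j)).subset)
    · exact cr_sp5 hmem hchain hss hj.2 v.2 hv
  have hchoice : ∀ j : ℕ, ∃ u : C.HS, j ∈ S → (u ∈ W.support ∧ Cr5 (hs j) u.1) := by
    intro j
    by_cases hj : j ∈ S
    · obtain ⟨u, hu⟩ := hex j hj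
      exact ⟨u, fun _ => hu⟩
    · exact ⟨⟨hs 0, hmem 0⟩, fun h => absurd h hj⟩
  choose f hf using hchoice
  set A := W.support.toFinset with hA
  set B := A.erase (⟨hs 0, hmem 0⟩ : C.HS) with hB
  set T := B.erase v with hT
  have h0v : (⟨hs 0, hmem 0⟩ : C.HS) ≠ v := by
    intro e
    rw [← e] at hv
    exact cr_hs_ne5 hmem hchain (by omega : k ≠ 0) hv
  have hsub : ∀ j ∈ S, f j ∈ T := by
    intro j hj
    obtain ⟨hu1, hu2⟩ := hf j hj
    have hjS := hj
    rw [hS, Finset.mem_Ico] at hjS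
    have hfv : f j ≠ v := by
      intro e
      rw [e] at hu2
      exact cr_unique5 hmem hchain hss (Nat.ne_of_lt hjS.2) v.2 hu2 hv
    have hf0 : f j ≠ ⟨hs 0, hmem 0⟩ := by
      intro e
      rw [e] at hu2
      exact cr_hs_ne5 hmem hchain (by omega : j ≠ 0) hu2
    rw [hT, Finset.mem_erase, hB, Finset.mem_erase, hA]
    exact ⟨hfv, hf0, List.mem_toFinset.mpr hu1⟩
  have hinj : Set.InjOn f S := by
    intro j1 hj1 j2 hj2 e
    by_contra hne
    refine cr_unique5 hmem hchain hss hne (f j1).2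
      (hf j1 (Finset.mem_coe.mp hj1)).2 ?_
    rw [e]
    exact (hf j2 (Finset.mem_coe.mp hj2)).2
  have hcard : S.card ≤ T.card := Finset.card_le_card_of_injOn f hsub hinj
  have hvB : v ∈ B :=
    Finset.mem_erase.mpr ⟨Ne.symm h0v, List.mem_toFinset.mpr W.end_mem_support⟩
  have h0A : (⟨hs 0, hmem 0⟩ : C.HS) ∈ A := List.mem_toFinset.mpr W.start_mem_support
  have e1 : T.card = B.card - 1 := by rw [hT]; exact Finset.card_erase_of_mem hvB
  have e2 : B.card = A.card - 1 := by rw [hB]; exact Finset.card_erase_of_mem h0A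
  have e3 : A.card ≤ W.length + 1 := by
    calc A.card ≤ W.support.length := W.support.toFinset_card_le
      _ = W.length + 1 := W.length_support
  have e4 : 1 ≤ B.card := Finset.card_pos.mpr ⟨v, hvB⟩
  have e5 : S.card = k - 1 := by rw [hS]; exact Nat.card_Ico 1 k
  have e6 : 1 ≤ A.card := Finset.card_pos.mpr ⟨_, h0A⟩
  omega

include hmem hchain hss in
lemma reach_bound5 {k n : ℕ} (hk1 : 1 ≤ k) (hkn : k < n)
    (p : C.contactGraph.Walk ⟨hs 0, hmem 0⟩ ⟨hs n, hmem n⟩) :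
    ∃ s : ℕ, s + k ≤ p.length ∧
      C.contactGraph.edist ⟨hs k, hmem k⟩ ⟨hs n, hmem n⟩ ≤ ((s + 1 : ℕ) : ℕ∞) := by
  classical
  have sa : SP5 (hs k)ᶜ ((⟨hs 0, hmem 0⟩ : C.HS)).1 :=
    Or.inr (compl_subset_compl.mpr (hmono5 hchain (by omega : (0:ℕ) < k)).subset)
  have sb : SP5 (hs k) ((⟨hs n, hmem n⟩ : C.HS)).1 :=
    Or.inl (hmono5 hchain hkn).subset
  obtain ⟨v, hvsup, hvcr⟩ := exists_cross5 (hmem k) p sa sb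
  have hpre : k ≤ (p.takeUntil v hvsup).length :=
    lemA5 hmem hchain hss hk1 hvcr (p.takeUntil v hvsup)
  have hlen : (p.takeUntil v hvsup).length + (p.dropUntil v hvsup).length = p.length := by
    have := congrArg SimpleGraph.Walk.length (p.take_spec hvsup)
    rwa [SimpleGraph.Walk.length_append] at this
  refine ⟨(p.dropUntil v hvsup).length, by omega, ?_⟩
  rcases hvcr with sh | t
  · -- `v` is an orientation of `hs k`
    have hvn : v ≠ (⟨hs n, hmem n⟩ : C.HS) := by
      intro e
      rw [e] at sh
      exact sameHyp_hs_false5 hmem hchain (by omega : k ≠ n) sh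
    obtain ⟨u, hadj, q', hq'⟩ :=
      (p.dropUntil v hvsup).exists_eq_cons_of_ne hvn
    have hadj' : C.contactGraph.Adj ⟨hs k, hmem k⟩ u :=
      (adj_congr5 sh.symm hadj.symm).symm
    have hlq : (p.dropUntil v hvsup).length = q'.length + 1 := by
      rw [hq', SimpleGraph.Walk.length_cons]
    have hle := SimpleGraph.edist_le (SimpleGraph.Walk.cons hadj' q')
    rw [SimpleGraph.Walk.length_cons] at hle
    refine hle.trans ?_
    exact Nat.cast_le.mpr (by omega)
  · -- `v` is transverse to `hs k`
    have hadj : C.contactGraph.Adj ⟨hs k, hmem k⟩ v := adj_of_transverse5 (hmem k) t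
    have hle := SimpleGraph.edist_le (SimpleGraph.Walk.cons hadj (p.dropUntil v hvsup))
    rw [SimpleGraph.Walk.length_cons] at hle
    exact hle

end Chain

end Aux5

/-- If `(h n)` is an infinite decreasing chain
`h (n+1) ⊂ h n` of pairwise strongly separated half-spaces, then the sequence of
hyperplanes `(ĥ n)` is a Gromov sequence in the contact graph:
`(ĥ n | ĥ m)_{ĥ 0} → ∞` as `n, m → ∞` (stated without subtraction as
`2 M + d(ĥ n, ĥ m) ≤ d(ĥ 0, ĥ n) + d(ĥ 0, ĥ m)` for `n, m` large); in
particular the contact graph is unbounded. -/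
theorem stmt5 (C : CubicalCpx V) (hs : ℕ → Set V)
    (hmem : ∀ i, hs i ∈ C.HS)
    (hchain : ∀ i, hs (i + 1) ⊂ hs i)
    (hss : ∀ i j, i ≠ j → C.StronglySeparated (hs i) (hs j)) :
    (∀ M : ℕ, ∃ K : ℕ, ∀ n m, K ≤ n → K ≤ m →
      2 * (M : ℕ∞) + C.contactGraph.edist ⟨hs n, hmem n⟩ ⟨hs m, hmem m⟩ ≤
        C.contactGraph.edist ⟨hs 0, hmem 0⟩ ⟨hs n, hmem n⟩
          + C.contactGraph.edist ⟨hs 0, hmem 0⟩ ⟨hs m, hmem m⟩) ∧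
    (∀ R : ℕ, ∃ n, (R : ℕ∞) ≤
      C.contactGraph.edist ⟨hs 0, hmem 0⟩ ⟨hs n, hmem n⟩) := by
  constructor
  · intro M
    refine ⟨M + 2, fun n m hn hm => ?_⟩
    set k := min n m - 1 with hkdef
    have hk1 : 1 ≤ k := by omega
    have hkM : M + 1 ≤ k := by omega
    have hkn : k < n := by omega
    have hkm : k < m := by omega
    by_cases h1 : C.contactGraph.edist ⟨hs 0, hmem 0⟩ ⟨hs n, hmem n⟩ = ⊤
    · rw [h1, top_add]
      exact le_top
    by_cases h2 : C.contactGraph.edist ⟨hs 0, hmem 0⟩ ⟨hs m, hmem m⟩ = ⊤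
    · rw [h2, add_top]
      exact le_top
    obtain ⟨p, hp⟩ := SimpleGraph.exists_walk_of_edist_ne_top h1
    obtain ⟨q, hq⟩ := SimpleGraph.exists_walk_of_edist_ne_top h2
    obtain ⟨s1, hs1, hd1⟩ := reach_bound5 hmem hchain hss hk1 hkn p
    obtain ⟨s2, hs2, hd2⟩ := reach_bound5 hmem hchain hss hk1 hkm q
    have tri : C.contactGraph.edist ⟨hs n, hmem n⟩ ⟨hs m, hmem m⟩ ≤
        ((s1 + 1 : ℕ) : ℕ∞) + ((s2 + 1 : ℕ) : ℕ∞) := by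
      refine (SimpleGraph.edist_triangle (v := ⟨hs k, hmem k⟩)).trans ?_
      refine add_le_add ?_ hd2
      rw [SimpleGraph.edist_comm]
      exact hd1
    have key : (2 * M + ((s1 + 1) + (s2 + 1)) : ℕ) ≤ p.length + q.length := by omega
    calc 2 * (M : ℕ∞) + C.contactGraph.edist ⟨hs n, hmem n⟩ ⟨hs m, hmem m⟩
        ≤ 2 * (M : ℕ∞) + (((s1 + 1 : ℕ) : ℕ∞) + ((s2 + 1 : ℕ) : ℕ∞)) :=
          add_le_add le_rfl tri
      _ = ((2 * M + ((s1 + 1) + (s2 + 1)) : ℕ) : ℕ∞) := by push_cast; ring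
      _ ≤ ((p.length + q.length : ℕ) : ℕ∞) := Nat.cast_le.mpr key
      _ = C.contactGraph.edist ⟨hs 0, hmem 0⟩ ⟨hs n, hmem n⟩
          + C.contactGraph.edist ⟨hs 0, hmem 0⟩ ⟨hs m, hmem m⟩ := by
          push_cast
          rw [hp, hq]
  · intro R
    refine ⟨R, ?_⟩
    by_cases hR : R = 0
    · subst hR
      simp
    by_cases h1 : C.contactGraph.edist ⟨hs 0, hmem 0⟩ ⟨hs R, hmem R⟩ = ⊤
    · rw [h1]
      exact le_top
    obtain ⟨p, hp⟩ := SimpleGraph.exists_walk_of_edist_ne_top h1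
    have hRle : R ≤ p.length :=
      lemA5 hmem hchain hss (by omega) (v := ⟨hs R, hmem R⟩) (Or.inl (Or.inl rfl)) p
    rw [← hp]
    exact_mod_cast hRle
end

section
/- Let a group G act by automorphisms on a finite-dimensional CAT(0) cubical complex X with Roller compactification X̄, fix a basepoint o ∈ X, and define h_x(a) = d(o,a) − 2(a|x)_o for x ∈ X̄ and a ∈ X (the horofunction based at o). Then the map σ : G × X̄ → ℝ given by σ(g, x) = h_x(g⁻¹ o) is a cocycle: σ(g g', x) = σ(g, g' x) + σ(g', x) for all g, g' ∈ G and x ∈ X̄. -/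
/-!
The Roller compactification `X̄` of a finite-dimensional CAT(0) cubical
complex, modeled via ultrafilters on the pocset `H` of half-spaces (with
involution `c : h ↦ h*`).  A group `G` acts on `H` commuting with `c`, hence on
points by taking images of ultrafilters.  The horofunction based at the vertex
`o` is `h_x(a) = d(o,a) − 2 (a|x)_o`, where `(a|x)_o = d(o, m(a,x,o))`.
-/

open Set

/-- the median -/
def med {H : Type*} (A B C : Set H) : Set H := (A ∩ B) ∪ (B ∩ C) ∪ (C ∩ A)

/-- the combinatorial distance `d(a,b) = |U_a \ U_b| (= ½|U_a △ U_b|)` -/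
noncomputable def dd {H : Type*} (A B : Set H) : ℕ := (A \ B).ncard

/-- the action of `g` on a point of the Roller compactification -/
def ptAct {H G : Type*} [Group G] [MulAction G H] (g : G) (U : Set H) : Set H :=
  (g • ·) '' U

open scoped Classical in
/-- A set's `ncard`, as a sum of indicators over an ambient finset. -/
lemma aux_ncard_eq_sum {α : Type*} (S : Finset α) (T : Set α) (hT : T ⊆ ↑S) :
    (T.ncard : ℤ) = ∑ h ∈ S, if h ∈ T then 1 else 0 := by
  classical
  rw [Finset.sum_boole]
  congr 1
  rw [← Set.ncard_coe_finset]
  congr 1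
  ext h
  simp only [Finset.coe_filter, Set.mem_setOf_eq]
  exact ⟨fun hh => ⟨hT hh, hh⟩, fun hh => hh.2⟩

/-- Additivity of the signed count. -/
lemma aux_signed_add {α : Type*} (Uo A B x : Set α)
    (h1 : (Uo \ A).Finite) (h2 : (A \ Uo).Finite)
    (h3 : (Uo \ B).Finite) (h4 : (B \ Uo).Finite) :
    (((Uo \ A) ∩ x).ncard : ℤ) - (((A \ Uo) ∩ x).ncard : ℤ)
      = ((((B \ A) ∩ x).ncard : ℤ) - (((A \ B) ∩ x).ncard : ℤ))
        + ((((Uo \ B) ∩ x).ncard : ℤ) - (((B \ Uo) ∩ x).ncard : ℤ)) := by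
  classical
  have hS : (((Uo \ A) ∪ (A \ Uo) ∪ (Uo \ B) ∪ (B \ Uo)) ∩ x).Finite :=
    (((h1.union h2).union h3).union h4).inter_of_left x
  set S := hS.toFinset with hSdef
  have hcoe : (↑S : Set α) = ((Uo \ A) ∪ (A \ Uo) ∪ (Uo \ B) ∪ (B \ Uo)) ∩ x :=
    hS.coe_toFinset
  have sub1 : (Uo \ A) ∩ x ⊆ ↑S := by rw [hcoe]; intro h hh; exact ⟨Or.inl (Or.inl (Or.inl hh.1)), hh.2⟩
  have sub2 : (A \ Uo) ∩ x ⊆ ↑S := by rw [hcoe]; intro h hh; exact ⟨Or.inl (Or.inl (Or.inr hh.1)), hh.2⟩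
  have sub3 : (Uo \ B) ∩ x ⊆ ↑S := by rw [hcoe]; intro h hh; exact ⟨Or.inl (Or.inr hh.1), hh.2⟩
  have sub4 : (B \ Uo) ∩ x ⊆ ↑S := by rw [hcoe]; intro h hh; exact ⟨Or.inr hh.1, hh.2⟩
  have sub5 : (B \ A) ∩ x ⊆ ↑S := by
    rw [hcoe]; intro h hh
    refine ⟨?_, hh.2⟩
    by_cases hU : h ∈ Uo
    · exact Or.inl (Or.inl (Or.inl ⟨hU, hh.1.2⟩))
    · exact Or.inr ⟨hh.1.1, hU⟩
  have sub6 : (A \ B) ∩ x ⊆ ↑S := by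
    rw [hcoe]; intro h hh
    refine ⟨?_, hh.2⟩
    by_cases hU : h ∈ Uo
    · exact Or.inl (Or.inr ⟨hU, hh.1.2⟩)
    · exact Or.inl (Or.inl (Or.inr ⟨hh.1.1, hU⟩))
  rw [aux_ncard_eq_sum S _ sub1, aux_ncard_eq_sum S _ sub2, aux_ncard_eq_sum S _ sub3,
    aux_ncard_eq_sum S _ sub4, aux_ncard_eq_sum S _ sub5, aux_ncard_eq_sum S _ sub6,
    ← Finset.sum_sub_distrib, ← Finset.sum_sub_distrib, ← Finset.sum_sub_distrib,
    ← Finset.sum_add_distrib]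
  apply Finset.sum_congr rfl
  intro h _
  by_cases hU : h ∈ Uo <;> by_cases hA : h ∈ A <;> by_cases hB : h ∈ B <;>
    simp [Set.mem_inter_iff, Set.mem_diff, hU, hA, hB]

/-- The horofunction value as a signed count. -/
lemma aux_horo {α : Type*} (c : α → α) (hc : ∀ h, c (c h) = h)
    (Uo a x : Set α) (ho : ∀ h, h ∈ Uo ↔ c h ∉ Uo)
    (ha : ∀ h, h ∈ a ↔ c h ∉ a) (hx : ∀ h, h ∈ x ↔ c h ∉ x)
    (hfa : (Uo \ a).Finite) :
    (dd Uo a : ℤ) - 2 * (dd Uo (med a x Uo) : ℤ)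
      = (((Uo \ a) ∩ x).ncard : ℤ) - (((a \ Uo) ∩ x).ncard : ℤ) := by
  have cinj : Function.Injective c := Function.LeftInverse.injective hc
  have hmed : Uo \ med a x Uo = (Uo \ a) \ x := by
    ext h
    simp only [med, Set.mem_diff, Set.mem_union, Set.mem_inter_iff]
    tauto
  have hkey : ∀ (s : Set α) (y : α), y ∈ c '' s ↔ c y ∈ s := by
    intro s y
    constructor
    · rintro ⟨z, hz, rfl⟩; rwa [hc]
    · intro hy; exact ⟨c y, hy, hc y⟩
  have himg : c '' ((Uo \ a) \ x) = (a \ Uo) ∩ x := by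
    ext h
    rw [hkey]
    simp only [Set.mem_diff, Set.mem_inter_iff]
    have h1 := ho h; have h2 := ha h; have h3 := hx h
    tauto
  have hcard : ((Uo \ a) \ x).ncard = ((a \ Uo) ∩ x).ncard := by
    rw [← himg, Set.ncard_image_of_injective _ cinj]
  have hsplit : ((Uo \ a) ∩ x).ncard + ((Uo \ a) \ x).ncard = (Uo \ a).ncard :=
    Set.ncard_inter_add_ncard_diff_eq_ncard _ _ hfa
  have hdd2 : dd Uo (med a x Uo) = ((a \ Uo) ∩ x).ncard := by
    rw [dd, hmed, hcard]
  rw [dd, hdd2, ← hsplit, hcard]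
  push_cast
  ring

/-- ultrafilter property is preserved by the action -/
lemma aux_ult_ptAct {H G : Type*} [Group G] [MulAction G H]
    (c : H → H) (hequiv : ∀ (g : G) (h : H), g • (c h) = c (g • h))
    (g : G) (x : Set H) (hx : ∀ h, h ∈ x ↔ c h ∉ x) :
    ∀ h, h ∈ ptAct g x ↔ c h ∉ ptAct g x := by
  intro h
  have hmem : ∀ y, y ∈ ptAct g x ↔ g⁻¹ • y ∈ x := by
    intro y
    constructor
    · rintro ⟨z, hz, rfl⟩; simpa using hz
    · intro hy; exact ⟨g⁻¹ • y, hy, by simp⟩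
  rw [hmem, hmem, hequiv]
  exact hx _

/-- Let `G` act by automorphisms on `X` (equivalently on the
half-space pocset, commuting with the involution), let `o` be a vertex, and let
`σ(g, x) = h_x(g⁻¹ o)` where `h_x(a) = d(o,a) − 2 (a|x)_o` is the horofunction
based at `o`.  Then `σ` is a cocycle: `σ(g g', x) = σ(g, g' x) + σ(g', x)`. -/
theorem stmt12 {H G : Type*} [Group G] [MulAction G H]
    (c : H → H) (hc : ∀ h, c (c h) = h)
    (hequiv : ∀ (g : G) (h : H), g • (c h) = c (g • h))
    (Uo : Set H) (ho : ∀ h, h ∈ Uo ↔ c h ∉ Uo)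
    (hfin : ∀ g : G, (ptAct g Uo \ Uo).Finite ∧ (Uo \ ptAct g Uo).Finite)
    (σ : G → Set H → ℝ)
    (hσ : ∀ (g : G) (x : Set H), σ g x =
      (dd Uo (ptAct g⁻¹ Uo) : ℝ) - 2 * (dd Uo (med (ptAct g⁻¹ Uo) x Uo) : ℝ))
    (g g' : G) (x : Set H) (hx : ∀ h, h ∈ x ↔ c h ∉ x) :
    σ (g * g') x = σ g (ptAct g' x) + σ g' x := by
  set A := ptAct (g * g')⁻¹ Uo with hA
  set B := ptAct g'⁻¹ Uo with hB
  set B' := ptAct g⁻¹ Uo with hB'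
  have hultA : ∀ h, h ∈ A ↔ c h ∉ A := aux_ult_ptAct c hequiv _ Uo ho
  have hultB : ∀ h, h ∈ B ↔ c h ∉ B := aux_ult_ptAct c hequiv _ Uo ho
  have hultB' : ∀ h, h ∈ B' ↔ c h ∉ B' := aux_ult_ptAct c hequiv _ Uo ho
  have hultx' : ∀ h, h ∈ ptAct g' x ↔ c h ∉ ptAct g' x := aux_ult_ptAct c hequiv _ x hx
  -- the three horofunction values
  have e1 : σ (g * g') x
      = ((((Uo \ A) ∩ x).ncard : ℝ) - (((A \ Uo) ∩ x).ncard : ℝ)) := by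
    rw [hσ]
    rw [← hA]
    have := aux_horo c hc Uo A x ho hultA hx (hfin (g * g')⁻¹).2
    exact_mod_cast this
  have e3 : σ g' x
      = ((((Uo \ B) ∩ x).ncard : ℝ) - (((B \ Uo) ∩ x).ncard : ℝ)) := by
    rw [hσ]
    rw [← hB]
    have := aux_horo c hc Uo B x ho hultB hx (hfin g'⁻¹).2
    exact_mod_cast this
  have e2 : σ g (ptAct g' x)
      = ((((Uo \ B') ∩ ptAct g' x).ncard : ℝ)
          - (((B' \ Uo) ∩ ptAct g' x).ncard : ℝ)) := by
    rw [hσ]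
    rw [← hB']
    have := aux_horo c hc Uo B' (ptAct g' x) ho hultB' hultx' (hfin g⁻¹).2
    exact_mod_cast this
  -- equivariance: transport the middle term by the injection `g'⁻¹ • ·`
  have finj : Function.Injective (fun h : H => g'⁻¹ • h) :=
    MulAction.injective g'⁻¹
  have himg_img : ∀ (k : G) (s : Set H),
      (fun h : H => g'⁻¹ • h) '' (ptAct k s) = ptAct (g'⁻¹ * k) s := by
    intro k s
    simp only [ptAct, Set.image_image, mul_smul]
  have himgx : (fun h : H => g'⁻¹ • h) '' (ptAct g' x) = x := by
    rw [himg_img, inv_mul_cancel]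
    simp [ptAct]
  have himgU : (fun h : H => g'⁻¹ • h) '' Uo = B := by rw [hB]; rfl
  have himgB' : (fun h : H => g'⁻¹ • h) '' B' = A := by
    rw [hB', himg_img, hA, mul_inv_rev]
  have c1 : ((Uo \ B') ∩ ptAct g' x).ncard = ((B \ A) ∩ x).ncard := by
    rw [← Set.ncard_image_of_injective _ finj, Set.image_inter finj,
      Set.image_diff finj, himgx, himgU, himgB']
  have c2 : ((B' \ Uo) ∩ ptAct g' x).ncard = ((A \ B) ∩ x).ncard := by
    rw [← Set.ncard_image_of_injective _ finj, Set.image_inter finj,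
      Set.image_diff finj, himgx, himgU, himgB']
  -- finiteness
  have hF1 : (Uo \ A).Finite := (hfin (g * g')⁻¹).2
  have hF2 : (A \ Uo).Finite := (hfin (g * g')⁻¹).1
  have hF3 : (Uo \ B).Finite := (hfin g'⁻¹).2
  have hF4 : (B \ Uo).Finite := (hfin g'⁻¹).1
  have key := aux_signed_add Uo A B x hF1 hF2 hF3 hF4
  rw [e1, e2, e3, c1, c2]
  exact_mod_cast key
end

section
/- Let X be a finite-dimensional CAT(0) cubical complex with Roller compactification X̄, basepoint o, and horofunctions h_x(a) = d(o,a) − 2(a|x)_o. Then for every g ∈ Aut(X), every x, y ∈ X̄, and with the group acting on X̄: h_x(g⁻¹o) = −2(x | g⁻¹y)_o + 2(gx | y)_o + h_y(go). -/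
/-!
The Roller compactification of a finite-dimensional CAT(0) cubical complex,
modeled via ultrafilters on the pocset `H` of half-spaces (involution
`c : h ↦ h*`).  An automorphism is a bijection `g : H ≃ H` commuting with `c`;
it acts on points by taking images of ultrafilters.  `o` is a vertex (its
`g`- and `g⁻¹`-translates are at finite distance), `x, y` arbitrary points of
`X̄`; the horofunction based at `o` is `h_x(a) = d(o,a) − 2 (a|x)_o` with
`(a|x)_o = d(o, m(a,x,o))`.  As in the source, all the quantities occurring in
the identity are assumed finite.
-/

open Set

/-- the action of an automorphism on a point of the Roller compactification -/
def ptE {H : Type*} (e : H ≃ H) (U : Set H) : Set H := ⇑e '' U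

/-- For every automorphism `g` and all points `x, y` of the
Roller compactification,
`h_x(g⁻¹o) = −2 (x | g⁻¹y)_o + 2 (g x | y)_o + h_y(g o)`. -/
theorem stmt14 {H : Type*} (c : H → H) (hc : ∀ h, c (c h) = h)
    (g : H ≃ H) (hequiv : ∀ h, g (c h) = c (g h))
    (Uo Ux Uy : Set H)
    (ho : ∀ h, h ∈ Uo ↔ c h ∉ Uo)
    (hx : ∀ h, h ∈ Ux ↔ c h ∉ Ux)
    (hy : ∀ h, h ∈ Uy ↔ c h ∉ Uy)
    (hgo : (ptE g Uo \ Uo).Finite) (hog : (Uo \ ptE g Uo).Finite)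
    (hgo' : (ptE g.symm Uo \ Uo).Finite) (hog' : (Uo \ ptE g.symm Uo).Finite)
    (hfin₁ : (Uo \ med Ux (ptE g.symm Uy) Uo).Finite)
    (hfin₂ : (Uo \ med (ptE g Ux) Uy Uo).Finite) :
    (dd Uo (ptE g.symm Uo) : ℝ)
        - 2 * (dd Uo (med (ptE g.symm Uo) Ux Uo) : ℝ) =
      -2 * (dd Uo (med Ux (ptE g.symm Uy) Uo) : ℝ)
        + 2 * (dd Uo (med (ptE g Ux) Uy Uo) : ℝ)
        + ((dd Uo (ptE g Uo) : ℝ)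
            - 2 * (dd Uo (med (ptE g Uo) Uy Uo) : ℝ)) := by
  classical
  have hcinj : Function.Injective c := fun a b hab => by
    have := congrArg c hab; rwa [hc, hc] at this
  have hsymm : ∀ h, g.symm (c h) = c (g.symm h) := by
    intro h
    apply g.injective
    rw [Equiv.apply_symm_apply, hequiv, Equiv.apply_symm_apply]
  have cimg : ∀ S : Set H, c '' S = c ⁻¹' S := by
    intro S; ext h
    constructor
    · rintro ⟨a, ha, rfl⟩; simpa [hc] using ha
    · intro hh; exact ⟨c h, hh, hc h⟩
  have memg : ∀ (S : Set H) h, h ∈ ptE g S ↔ g.symm h ∈ S := by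
    intro S h; rw [ptE, Equiv.image_eq_preimage_symm]; rfl
  have memg' : ∀ (S : Set H) h, h ∈ ptE g.symm S ↔ g h ∈ S := by
    intro S h; rw [ptE, Equiv.image_eq_preimage_symm, Equiv.symm_symm]; rfl
  have ho' : ∀ h, c h ∈ Uo ↔ h ∉ Uo := fun h => by rw [ho (c h), hc]
  have hy' : ∀ h, c h ∈ Uy ↔ h ∉ Uy := fun h => by rw [hy (c h), hc]
  have hgUo : ∀ h, h ∈ ptE g Uo ↔ c h ∉ ptE g Uo := by
    intro h
    rw [memg, memg, hsymm]
    exact ho _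
  have hgUo' : ∀ h, c h ∈ ptE g Uo ↔ h ∉ ptE g Uo := fun h => by rw [hgUo (c h), hc]
  have hgUx : ∀ h, h ∈ ptE g Ux ↔ c h ∉ ptE g Ux := by
    intro h
    rw [memg, memg, hsymm]
    exact hx _
  have hgUx' : ∀ h, c h ∈ ptE g Ux ↔ h ∉ ptE g Ux := fun h => by rw [hgUx (c h), hc]
  have hmed : ∀ A B : Set H, Uo \ med A B Uo = (Uo \ A) ∩ (Uo \ B) := by
    intro A B; ext h
    simp only [med, mem_diff, mem_union, mem_inter_iff]
    tauto
  -- notation for the pieces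
  set E : Set H := ptE g Uo \ Uo with hEdef
  set F : Set H := Uo \ ptE g Uo with hFdef
  have hE : E.Finite := hgo
  have hF : F.Finite := hog
  -- step 1 : d(o, g⁻¹ o) = d(o, g o)
  have img1 : ⇑g '' (Uo \ ptE g.symm Uo) = E := by
    ext h
    rw [hEdef]
    simp only [Equiv.image_eq_preimage_symm, mem_preimage, mem_diff, memg', memg,
      Equiv.apply_symm_apply]
  have img2 : c '' E = F := by
    ext h
    rw [hEdef, hFdef, cimg]
    simp only [mem_preimage, mem_diff, hgUo', ho']
    tauto
  have eqO : (Uo \ ptE g.symm Uo).ncard = (Uo \ ptE g Uo).ncard := by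
    calc (Uo \ ptE g.symm Uo).ncard
        = (⇑g '' (Uo \ ptE g.symm Uo)).ncard :=
          (ncard_image_of_injective _ g.injective).symm
      _ = E.ncard := by rw [img1]
      _ = (c '' E).ncard := (ncard_image_of_injective _ hcinj).symm
      _ = F.ncard := by rw [img2]
  -- the pieces of the main identity
  set K : Set H := (ptE g Uo ∩ Uo) ∩ (ptE g Ux)ᶜ ∩ Uyᶜ with hKdef
  set EPQ : Set H := E ∩ (ptE g Ux)ᶜ ∩ Uyᶜ with hEPQdef
  set EPy : Set H := E ∩ (ptE g Ux)ᶜ ∩ Uy with hEPydef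
  set FPQ : Set H := F ∩ (ptE g Ux)ᶜ ∩ Uyᶜ with hFPQdef
  set FxQ : Set H := F ∩ (ptE g Ux) ∩ Uyᶜ with hFxQdef
  have hCfin : ((Uo \ ptE g Ux) ∩ (Uo \ Uy)).Finite := by
    rw [← hmed]; exact hfin₂
  have hKfin : K.Finite := by
    apply hCfin.subset
    rw [hKdef]
    intro h hh
    simp only [mem_inter_iff, mem_compl_iff, mem_diff] at hh ⊢
    tauto
  have hEPQ : EPQ.Finite := hE.subset (by rw [hEPQdef]; intro h hh; exact hh.1.1)
  have hEPy : EPy.Finite := hE.subset (by rw [hEPydef]; intro h hh; exact hh.1.1)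
  have hFPQ : FPQ.Finite := hF.subset (by rw [hFPQdef]; intro h hh; exact hh.1.1)
  have hFxQ : FxQ.Finite := hF.subset (by rw [hFxQdef]; intro h hh; exact hh.1.1)
  -- a = |E ∩ P| = |EPQ| + |EPy|
  have imgA : ⇑g '' ((Uo \ ptE g.symm Uo) ∩ (Uo \ Ux)) = E ∩ (ptE g Ux)ᶜ := by
    ext h
    rw [hEdef]
    simp only [Equiv.image_eq_preimage_symm, mem_preimage, mem_inter_iff, mem_diff,
      mem_compl_iff, memg', memg, Equiv.apply_symm_apply]
    tauto
  have eqa : ((Uo \ ptE g.symm Uo) ∩ (Uo \ Ux)).ncard = EPQ.ncard + EPy.ncard := by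
    have hsplit : E ∩ (ptE g Ux)ᶜ = EPQ ∪ EPy := by
      rw [hEPQdef, hEPydef]; ext h
      simp only [mem_inter_iff, mem_union, mem_compl_iff]
      tauto
    have hdisj : Disjoint EPQ EPy := by
      rw [hEPQdef, hEPydef, disjoint_left]
      intro h h1 h2
      exact h1.2 h2.2
    calc ((Uo \ ptE g.symm Uo) ∩ (Uo \ Ux)).ncard
        = (⇑g '' ((Uo \ ptE g.symm Uo) ∩ (Uo \ Ux))).ncard :=
          (ncard_image_of_injective _ g.injective).symm
      _ = (EPQ ∪ EPy).ncard := by rw [imgA, hsplit]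
      _ = EPQ.ncard + EPy.ncard := ncard_union_eq hdisj hEPQ hEPy
  -- b = |K| + |EPQ|
  have imgB : ⇑g '' ((Uo \ Ux) ∩ (Uo \ ptE g.symm Uy))
      = ptE g Uo ∩ (ptE g Ux)ᶜ ∩ Uyᶜ := by
    ext h
    simp only [Equiv.image_eq_preimage_symm, mem_preimage, mem_inter_iff, mem_diff,
      mem_compl_iff, memg', memg, Equiv.apply_symm_apply]
    tauto
  have eqb : ((Uo \ Ux) ∩ (Uo \ ptE g.symm Uy)).ncard = K.ncard + EPQ.ncard := by
    have hsplit : ptE g Uo ∩ (ptE g Ux)ᶜ ∩ Uyᶜ = K ∪ EPQ := by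
      rw [hKdef, hEPQdef, hEdef]; ext h
      simp only [mem_inter_iff, mem_union, mem_compl_iff, mem_diff]
      tauto
    have hdisj : Disjoint K EPQ := by
      rw [hKdef, hEPQdef, hEdef, disjoint_left]
      intro h h1 h2
      exact h2.1.1.2 h1.1.1.2
    calc ((Uo \ Ux) ∩ (Uo \ ptE g.symm Uy)).ncard
        = (⇑g '' ((Uo \ Ux) ∩ (Uo \ ptE g.symm Uy))).ncard :=
          (ncard_image_of_injective _ g.injective).symm
      _ = (K ∪ EPQ).ncard := by rw [imgB, hsplit]
      _ = K.ncard + EPQ.ncard := ncard_union_eq hdisj hKfin hEPQ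
  -- c = |K| + |FPQ|
  have eqc : ((Uo \ ptE g Ux) ∩ (Uo \ Uy)).ncard = K.ncard + FPQ.ncard := by
    have hsplit : (Uo \ ptE g Ux) ∩ (Uo \ Uy) = K ∪ FPQ := by
      rw [hKdef, hFPQdef, hFdef]; ext h
      simp only [mem_inter_iff, mem_union, mem_compl_iff, mem_diff]
      tauto
    have hdisj : Disjoint K FPQ := by
      rw [hKdef, hFPQdef, hFdef, disjoint_left]
      intro h h1 h2
      exact h2.1.1.2 h1.1.1.1
    rw [hsplit]
    exact ncard_union_eq hdisj hKfin hFPQ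
  -- d = |FxQ| + |FPQ|
  have eqd : ((Uo \ ptE g Uo) ∩ (Uo \ Uy)).ncard = FxQ.ncard + FPQ.ncard := by
    have hsplit : (Uo \ ptE g Uo) ∩ (Uo \ Uy) = FxQ ∪ FPQ := by
      rw [hFxQdef, hFPQdef, hFdef]; ext h
      simp only [mem_inter_iff, mem_union, mem_compl_iff, mem_diff]
      tauto
    have hdisj : Disjoint FxQ FPQ := by
      rw [hFxQdef, hFPQdef, disjoint_left]
      intro h h1 h2
      exact h2.1.2 h1.1.2
    rw [hsplit]
    exact ncard_union_eq hdisj hFxQ hFPQ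
  -- |EPy| = |FxQ|
  have imgE : c '' EPy = FxQ := by
    rw [hEPydef, hFxQdef, hEdef, hFdef, cimg]
    ext h
    simp only [mem_preimage, mem_inter_iff, mem_diff, mem_compl_iff, hgUo', ho',
      hgUx', hy']
    tauto
  have eqEF : EPy.ncard = FxQ.ncard := by
    rw [← imgE]; exact (ncard_image_of_injective _ hcinj).symm
  -- conclude
  simp only [dd, hmed]
  have e1 : ((Uo \ ptE g.symm Uo).ncard : ℝ) = ((Uo \ ptE g Uo).ncard : ℝ) := by
    exact_mod_cast eqO
  have e2 : (((Uo \ ptE g.symm Uo) ∩ (Uo \ Ux)).ncard : ℝ)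
      = (EPQ.ncard : ℝ) + (EPy.ncard : ℝ) := by exact_mod_cast eqa
  have e3 : (((Uo \ Ux) ∩ (Uo \ ptE g.symm Uy)).ncard : ℝ)
      = (K.ncard : ℝ) + (EPQ.ncard : ℝ) := by exact_mod_cast eqb
  have e4 : (((Uo \ ptE g Ux) ∩ (Uo \ Uy)).ncard : ℝ)
      = (K.ncard : ℝ) + (FPQ.ncard : ℝ) := by exact_mod_cast eqc
  have e5 : (((Uo \ ptE g Uo) ∩ (Uo \ Uy)).ncard : ℝ)
      = (FxQ.ncard : ℝ) + (FPQ.ncard : ℝ) := by exact_mod_cast eqd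
  have e6 : (EPy.ncard : ℝ) = (FxQ.ncard : ℝ) := by exact_mod_cast eqEF
  linarith
end
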